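/- Let m, n ≥ 1 and let 𝓛 be the first-order language with two unary relation symbols P, L and one binary relation symbol I. There exists an 𝓛-theory T such that for every 𝓛-structure M, M is a model of T if and only if M is a K_{m,n}-free incidence structure that is existentially closed (among K_{m,n}-free incidence structures). -/

import Mathlib

open FirstOrder FirstOrder.Language

universe u v

/-- Relation symbols of the language of incidence structures: two unary symbols
(`pt` for "point", `lin` for "line") and one binary symbol (`inc` for "incidence"). -/
inductive IncRel : ℕ → Type
  | pt : IncRel 1
  | lin : IncRel 1
  | inc : IncRel 2

/-- The first-order language `{P, L, I}` of incidence structures. -/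
def IncLang : FirstOrder.Language := ⟨fun _ => Empty, IncRel⟩

section
variable {M : Type u} [IncLang.Structure M]

/-- `x` is a point. -/
def ptL (x : M) : Prop := Structure.RelMap (L := IncLang) IncRel.pt ![x]

/-- `x` is a line. -/
def lnL (x : M) : Prop := Structure.RelMap (L := IncLang) IncRel.lin ![x]

/-- `x` is incident to `y`. -/
def incL (x y : M) : Prop := Structure.RelMap (L := IncLang) IncRel.inc ![x, y]

end

/-- `M` is an incidence structure: points and lines partition the domain, and
incidence only holds between a point and a line. -/
def IsIncidenceL (M : Type u) [IncLang.Structure M] : Prop :=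
  (∀ x : M, ptL x ∨ lnL x) ∧ (∀ x : M, ¬(ptL x ∧ lnL x)) ∧
    ∀ x y : M, incL x y → ptL x ∧ lnL y

/-- `M` is `K_{m,n}`-free: there are no `m` pairwise distinct points and `n` pairwise
distinct lines with every one of the points incident to every one of the lines. -/
def KFreeL (m n : ℕ) (M : Type u) [IncLang.Structure M] : Prop :=
  ¬∃ (a : Fin m → M) (b : Fin n → M),
      Function.Injective a ∧ Function.Injective b ∧
      (∀ i, ptL (a i)) ∧ (∀ j, lnL (b j)) ∧ ∀ i j, incL (a i) (b j)

/-- `M` is an existentially closed `K_{m,n}`-free incidence structure: `M` is a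
`K_{m,n}`-free incidence structure, and for every `K_{m,n}`-free incidence structure
`N` containing `M` as an induced substructure (i.e. admitting an embedding of `M`),
every existential formula `∃ ȳ φ(ā, ȳ)` (with `φ` quantifier-free and parameters `ā`
from `M`) that holds in `N` also holds in `M`. -/
def IsECL (m n : ℕ) (M : Type u) [IncLang.Structure M] : Prop :=
  IsIncidenceL M ∧ KFreeL m n M ∧
    ∀ (N : Type u) [IncLang.Structure N], IsIncidenceL N → KFreeL m n N →
      ∀ (f : M ↪[IncLang] N) (k : ℕ) (φ : IncLang.BoundedFormula M k), φ.IsQF →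
        (∃ xs : Fin k → N, φ.Realize (f : M → N) xs) →
          ∃ xs : Fin k → M, φ.Realize (id : M → M) xs

universe w

noncomputable section
open Classical

namespace IncAux

abbrev BF (α : Type w) (n : ℕ) := IncLang.BoundedFormula α n

def ptA {α : Type w} {n : ℕ} (t : IncLang.Term (α ⊕ Fin n)) : BF α n :=
  Relations.boundedFormula₁ IncRel.pt t

def lnA {α : Type w} {n : ℕ} (t : IncLang.Term (α ⊕ Fin n)) : BF α n :=
  Relations.boundedFormula₁ IncRel.lin t

def incA {α : Type w} {n : ℕ} (t₁ t₂ : IncLang.Term (α ⊕ Fin n)) : BF α n :=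
  Relations.boundedFormula₂ IncRel.inc t₁ t₂

variable {M : Type u} [IncLang.Structure M] {α : Type w} {nn : ℕ}

@[simp] lemma realize_ptA {v : α → M} {xs : Fin nn → M} (t : IncLang.Term (α ⊕ Fin nn)) :
    (ptA t).Realize v xs ↔ ptL (t.realize (Sum.elim v xs)) := by
  exact BoundedFormula.realize_rel₁

@[simp] lemma realize_lnA {v : α → M} {xs : Fin nn → M} (t : IncLang.Term (α ⊕ Fin nn)) :
    (lnA t).Realize v xs ↔ lnL (t.realize (Sum.elim v xs)) := by
  exact BoundedFormula.realize_rel₁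

@[simp] lemma realize_incA {v : α → M} {xs : Fin nn → M} (t₁ t₂ : IncLang.Term (α ⊕ Fin nn)) :
    (incA t₁ t₂).Realize v xs ↔
      incL (t₁.realize (Sum.elim v xs)) (t₂.realize (Sum.elim v xs)) := by
  exact BoundedFormula.realize_rel₂

lemma isQF_ptA (t : IncLang.Term (α ⊕ Fin nn)) : (ptA t).IsQF :=
  (BoundedFormula.IsAtomic.rel _ _).isQF

lemma isQF_lnA (t : IncLang.Term (α ⊕ Fin nn)) : (lnA t).IsQF :=
  (BoundedFormula.IsAtomic.rel _ _).isQF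

lemma isQF_incA (t₁ t₂ : IncLang.Term (α ⊕ Fin nn)) : (incA t₁ t₂).IsQF :=
  (BoundedFormula.IsAtomic.rel _ _).isQF

/-- finite conjunction -/
def finConj : ∀ (N : ℕ), (Fin N → BF α nn) → BF α nn
  | 0, _ => ⊤
  | N + 1, F => finConj N (fun i => F i.castSucc) ⊓ F (Fin.last N)

lemma realize_finConj {v : α → M} {xs : Fin nn → M} :
    ∀ (N : ℕ) (F : Fin N → BF α nn),
      (finConj N F).Realize v xs ↔ ∀ i, (F i).Realize v xs
  | 0, F => by
    simp only [finConj, BoundedFormula.realize_top, true_iff]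
    exact fun i => i.elim0
  | N + 1, F => by
    rw [finConj, BoundedFormula.realize_inf, realize_finConj N]
    constructor
    · rintro ⟨h1, h2⟩ i
      refine Fin.lastCases h2 h1 i
    · intro h
      exact ⟨fun i => h _, h _⟩

lemma isQF_finConj : ∀ (N : ℕ) (F : Fin N → BF α nn), (∀ i, (F i).IsQF) →
      (finConj N F).IsQF
  | 0, F, _ => BoundedFormula.IsQF.top
  | N + 1, F, h => (isQF_finConj N _ (fun i => h _)).inf (h _)

/-- existential quantification of the last `k` variables -/
def exsAux {j : ℕ} : ∀ (k : ℕ), BF α (j + k) → BF α j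
  | 0, φ => φ
  | k + 1, φ => exsAux k φ.ex

lemma realize_exsAux {j : ℕ} :
    ∀ (k : ℕ) (φ : BF α (j + k)) (v : α → M) (xs : Fin j → M),
      (exsAux k φ).Realize v xs ↔ ∃ ys : Fin k → M, φ.Realize v (Fin.append xs ys)
  | 0, φ, v, xs => by
    rw [exsAux]
    constructor
    · intro h
      refine ⟨Fin.elim0, ?_⟩
      rwa [Fin.append_elim0, Fin.cast_refl, Function.comp_id]
    · rintro ⟨ys, h⟩
      have : ys = Fin.elim0 := Subsingleton.elim _ _
      rw [this] at h
      rwa [Fin.append_elim0, Fin.cast_refl, Function.comp_id] at h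
  | k + 1, φ, v, xs => by
    rw [exsAux, realize_exsAux k]
    constructor
    · rintro ⟨ys, h⟩
      rw [BoundedFormula.realize_ex] at h
      obtain ⟨a, ha⟩ := h
      exact ⟨Fin.snoc ys a, by rwa [Fin.append_snoc]⟩
    · rintro ⟨ys, h⟩
      refine ⟨Fin.init ys, ?_⟩
      rw [BoundedFormula.realize_ex]
      exact ⟨ys (Fin.last k), by rwa [← Fin.append_snoc, Fin.snoc_init_self]⟩

end IncAux

namespace IncAux

variable {α : Type w} {nn : ℕ}

def vT {α : Type w} {n : ℕ} (i : Fin n) : IncLang.Term (α ⊕ Fin n) := Term.var (Sum.inr i)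

def pT {n : ℕ} (a : α) : IncLang.Term (α ⊕ Fin n) := Term.var (Sum.inl a)

def statusLit (b : Bool) (t : IncLang.Term (α ⊕ Fin nn)) : BF α nn :=
  if b then ptA t ⊓ (lnA t).not else lnA t ⊓ (ptA t).not

def incLit (b : Bool) (t₁ t₂ : IncLang.Term (α ⊕ Fin nn)) : BF α nn :=
  if b then incA t₁ t₂ else (incA t₁ t₂).not

def neqLit (t₁ t₂ : IncLang.Term (α ⊕ Fin nn)) : BF α nn := (t₁.bdEqual t₂).not

variable {M : Type u} [IncLang.Structure M]

@[simp] lemma realize_vT {v : α → M} {xs : Fin nn → M} (i : Fin nn) :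
    (vT i).realize (Sum.elim v xs) = xs i := rfl

@[simp] lemma realize_pT {v : α → M} {xs : Fin nn → M} (a : α) :
    (pT (n := nn) a).realize (Sum.elim v xs) = v a := rfl

lemma realize_statusLit {v : α → M} {xs : Fin nn → M} (b : Bool)
    (t : IncLang.Term (α ⊕ Fin nn)) :
    (statusLit b t).Realize v xs ↔
      ((ptL (t.realize (Sum.elim v xs)) ↔ b = true) ∧
       (lnL (t.realize (Sum.elim v xs)) ↔ b = false)) := by
  cases b <;>
    simp [statusLit, BoundedFormula.realize_inf, BoundedFormula.realize_not, and_comm]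

lemma realize_incLit {v : α → M} {xs : Fin nn → M} (b : Bool)
    (t₁ t₂ : IncLang.Term (α ⊕ Fin nn)) :
    (incLit b t₁ t₂).Realize v xs ↔
      (incL (t₁.realize (Sum.elim v xs)) (t₂.realize (Sum.elim v xs)) ↔ b = true) := by
  cases b <;> simp [incLit, BoundedFormula.realize_not]

lemma isQF_statusLit (b : Bool) (t : IncLang.Term (α ⊕ Fin nn)) : (statusLit b t).IsQF := by
  cases b <;> simp [statusLit] <;>
    exact BoundedFormula.IsQF.inf (by first | exact isQF_ptA t | exact isQF_lnA t)
      (BoundedFormula.IsQF.not (by first | exact isQF_lnA t | exact isQF_ptA t))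

lemma isQF_incLit (b : Bool) (t₁ t₂ : IncLang.Term (α ⊕ Fin nn)) : (incLit b t₁ t₂).IsQF := by
  cases b
  · exact (isQF_incA t₁ t₂).not
  · exact isQF_incA t₁ t₂

lemma isQF_neqLit (t₁ t₂ : IncLang.Term (α ⊕ Fin nn)) : (neqLit t₁ t₂).IsQF :=
  (BoundedFormula.IsAtomic.equal t₁ t₂).isQF.not

/-- the full diagram of a finite configuration, with designated terms -/
def cdiag (N : ℕ) (pt : Fin N → Bool) (inc : Fin N → Fin N → Bool)
    (t : Fin N → IncLang.Term (α ⊕ Fin nn)) : BF α nn :=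
  finConj N (fun u => statusLit (pt u) (t u)) ⊓
  (finConj N (fun u => finConj N (fun w => if u = w then ⊤ else neqLit (t u) (t w))) ⊓
   finConj N (fun u => finConj N (fun w => incLit (inc u w) (t u) (t w))))

lemma isQF_cdiag (N : ℕ) (pt : Fin N → Bool) (inc : Fin N → Fin N → Bool)
    (t : Fin N → IncLang.Term (α ⊕ Fin nn)) : (cdiag N pt inc t).IsQF := by
  refine (isQF_finConj _ _ fun u => isQF_statusLit _ _).inf
    ((isQF_finConj _ _ fun u => isQF_finConj _ _ fun w => ?_).inf
     (isQF_finConj _ _ fun u => isQF_finConj _ _ fun w => isQF_incLit _ _ _))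
  by_cases h : u = w
  · simp [h]; exact BoundedFormula.IsQF.top
  · simp [h]; exact isQF_neqLit _ _

lemma realize_cdiag {v : α → M} {xs : Fin nn → M} (N : ℕ) (pt : Fin N → Bool)
    (inc : Fin N → Fin N → Bool) (t : Fin N → IncLang.Term (α ⊕ Fin nn)) :
    (cdiag N pt inc t).Realize v xs ↔
      ((∀ u, (ptL ((t u).realize (Sum.elim v xs)) ↔ pt u = true) ∧
             (lnL ((t u).realize (Sum.elim v xs)) ↔ pt u = false)) ∧
       (∀ u w, u ≠ w → (t u).realize (Sum.elim v xs) ≠ (t w).realize (Sum.elim v xs)) ∧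
       (∀ u w, incL ((t u).realize (Sum.elim v xs)) ((t w).realize (Sum.elim v xs)) ↔
          inc u w = true)) := by
  simp only [cdiag, BoundedFormula.realize_inf, realize_finConj, realize_statusLit,
    realize_incLit]
  refine and_congr Iff.rfl (and_congr ?_ Iff.rfl)
  refine forall_congr' fun u => forall_congr' fun w => ?_
  by_cases h : u = w
  · simp [h]
  · simp [h, neqLit, BoundedFormula.realize_not, BoundedFormula.realize_bdEqual]

end IncAux
namespace IncAux

variable {α : Type w} {nn : ℕ} {M : Type u} [IncLang.Structure M]

def distinctConj (N : ℕ) (t : Fin N → IncLang.Term (α ⊕ Fin nn)) : BF α nn :=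
  finConj N (fun u => finConj N (fun w => if u = w then ⊤ else neqLit (t u) (t w)))

lemma realize_distinctConj {v : α → M} {xs : Fin nn → M} (N : ℕ)
    (t : Fin N → IncLang.Term (α ⊕ Fin nn)) :
    (distinctConj N t).Realize v xs ↔
      ∀ u w, u ≠ w → (t u).realize (Sum.elim v xs) ≠ (t w).realize (Sum.elim v xs) := by
  rw [distinctConj]
  simp only [realize_finConj]
  refine forall_congr' fun u => forall_congr' fun w => ?_
  by_cases h : u = w
  · simp [h]
  · simp [h, neqLit, BoundedFormula.realize_not, BoundedFormula.realize_bdEqual]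

def allConj {ι : Type} [Fintype ι] (F : ι → BF α nn) : BF α nn :=
  finConj (Fintype.card ι) (fun i => F ((Fintype.equivFin ι).symm i))

lemma realize_allConj {ι : Type} [Fintype ι] (F : ι → BF α nn) {v : α → M} {xs : Fin nn → M} :
    (allConj F).Realize v xs ↔ ∀ i, (F i).Realize v xs := by
  rw [allConj, realize_finConj]
  exact ⟨fun h i => by simpa using h ((Fintype.equivFin ι) i), fun h i => h _⟩

structure Config : Type where
  j : ℕ
  k : ℕ
  pt : Fin (j + k) → Bool
  inc : Fin (j + k) → Fin (j + k) → Bool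

def Config.Valid (m n : ℕ) (c : Config) : Prop :=
  (∀ u w, c.inc u w = true → c.pt u = true ∧ c.pt w = false) ∧
  ¬∃ (P : Fin m → Fin (c.j + c.k)) (Lf : Fin n → Fin (c.j + c.k)),
      Function.Injective P ∧ Function.Injective Lf ∧ (∀ i, c.pt (P i) = true) ∧
      (∀ i, c.pt (Lf i) = false) ∧ ∀ i i', c.inc (P i) (Lf i') = true

def thetaF (c : Config) : BF Empty c.j :=
  cdiag c.j (fun l => c.pt (Fin.castAdd c.k l))
    (fun l l' => c.inc (Fin.castAdd c.k l) (Fin.castAdd c.k l')) (fun l => vT l)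

def fullF (c : Config) : BF Empty (c.j + c.k) := cdiag (c.j + c.k) c.pt c.inc vT

lemma realize_thetaF {c : Config} {v : Empty → M} {a : Fin c.j → M} :
    (thetaF c).Realize v a ↔
      ((∀ l, (ptL (a l) ↔ c.pt (Fin.castAdd c.k l) = true) ∧
             (lnL (a l) ↔ c.pt (Fin.castAdd c.k l) = false)) ∧
       (∀ l l', l ≠ l' → a l ≠ a l') ∧
       (∀ l l', incL (a l) (a l') ↔ c.inc (Fin.castAdd c.k l) (Fin.castAdd c.k l') = true)) := by
  rw [thetaF, realize_cdiag]
  simp only [realize_vT]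

lemma realize_fullF {c : Config} {v : Empty → M} {es : Fin (c.j + c.k) → M} :
    (fullF c).Realize v es ↔
      ((∀ u, (ptL (es u) ↔ c.pt u = true) ∧ (lnL (es u) ↔ c.pt u = false)) ∧
       (∀ u w, u ≠ w → es u ≠ es w) ∧
       (∀ u w, incL (es u) (es w) ↔ c.inc u w = true)) := by
  rw [fullF, realize_cdiag]
  simp only [realize_vT]

def pcount (n : ℕ) (c : Config) (L : Fin n → Fin c.j) : ℕ :=
  (Finset.univ.filter (fun t : Fin c.k => c.pt (Fin.natAdd c.j t) = true ∧
    ∀ i, c.inc (Fin.natAdd c.j t) (Fin.castAdd c.k (L i)) = true)).card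

def qcount (m : ℕ) (c : Config) (P : Fin m → Fin c.j) : ℕ :=
  (Finset.univ.filter (fun t : Fin c.k => c.pt (Fin.natAdd c.j t) = false ∧
    ∀ i, c.inc (Fin.castAdd c.k (P i)) (Fin.natAdd c.j t) = true)).card

def innerP (n j r : ℕ) (L : Fin n → Fin j) : BF Empty (j + r) :=
  finConj r (fun s => ptA (vT (Fin.natAdd j s))) ⊓
  (distinctConj r (fun s => vT (Fin.natAdd j s)) ⊓
   finConj r (fun s => finConj n (fun i =>
     incA (vT (Fin.natAdd j s)) (vT (Fin.castAdd r (L i))))))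

def innerL (m j r : ℕ) (P : Fin m → Fin j) : BF Empty (j + r) :=
  finConj r (fun s => lnA (vT (Fin.natAdd j s))) ⊓
  (distinctConj r (fun s => vT (Fin.natAdd j s)) ⊓
   finConj r (fun s => finConj m (fun i =>
     incA (vT (Fin.castAdd r (P i))) (vT (Fin.natAdd j s)))))

lemma realize_innerP {n j r : ℕ} {L : Fin n → Fin j} {v : Empty → M} {a : Fin j → M}
    {zs : Fin r → M} :
    (innerP n j r L).Realize v (Fin.append a zs) ↔
      ((∀ s, ptL (zs s)) ∧ (∀ s s', s ≠ s' → zs s ≠ zs s') ∧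
       ∀ s i, incL (zs s) (a (L i))) := by
  rw [innerP]
  simp only [BoundedFormula.realize_inf, realize_finConj, realize_distinctConj, realize_ptA,
    realize_incA, realize_vT, Fin.append_right, Fin.append_left]

lemma realize_innerL {m j r : ℕ} {P : Fin m → Fin j} {v : Empty → M} {a : Fin j → M}
    {zs : Fin r → M} :
    (innerL m j r P).Realize v (Fin.append a zs) ↔
      ((∀ s, lnL (zs s)) ∧ (∀ s s', s ≠ s' → zs s ≠ zs s') ∧
       ∀ s i, incL (a (P i)) (zs s)) := by
  rw [innerL]
  simp only [BoundedFormula.realize_inf, realize_finConj, realize_distinctConj, realize_lnA,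
    realize_incA, realize_vT, Fin.append_right, Fin.append_left]

def guardP (m n : ℕ) (c : Config) (L : Fin n → Fin c.j) : BF Empty c.j :=
  if Function.Injective L ∧ ∀ i, c.pt (Fin.castAdd c.k (L i)) = false then
    (exsAux (m - pcount n c L) (innerP n c.j _ L)).not
  else ⊤

def guardL (m n : ℕ) (c : Config) (P : Fin m → Fin c.j) : BF Empty c.j :=
  if Function.Injective P ∧ ∀ i, c.pt (Fin.castAdd c.k (P i)) = true then
    (exsAux (n - qcount m c P) (innerL m c.j _ P)).not
  else ⊤

lemma realize_guardP {m n : ℕ} {c : Config} {L : Fin n → Fin c.j}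
    (hL : Function.Injective L ∧ ∀ i, c.pt (Fin.castAdd c.k (L i)) = false)
    {v : Empty → M} {a : Fin c.j → M} :
    (guardP m n c L).Realize v a ↔
      ¬ ∃ zs : Fin (m - pcount n c L) → M,
        (∀ s, ptL (zs s)) ∧ (∀ s s', s ≠ s' → zs s ≠ zs s') ∧
        ∀ s i, incL (zs s) (a (L i)) := by
  rw [guardP, if_pos hL, BoundedFormula.realize_not, realize_exsAux]
  exact not_congr (exists_congr fun zs => realize_innerP)

lemma realize_guardP_top {m n : ℕ} {c : Config} {L : Fin n → Fin c.j}
    (hL : ¬(Function.Injective L ∧ ∀ i, c.pt (Fin.castAdd c.k (L i)) = false))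
    {v : Empty → M} {a : Fin c.j → M} :
    (guardP m n c L).Realize v a := by
  rw [guardP, if_neg hL]
  exact BoundedFormula.realize_top.2 trivial

lemma realize_guardL {m n : ℕ} {c : Config} {P : Fin m → Fin c.j}
    (hP : Function.Injective P ∧ ∀ i, c.pt (Fin.castAdd c.k (P i)) = true)
    {v : Empty → M} {a : Fin c.j → M} :
    (guardL m n c P).Realize v a ↔
      ¬ ∃ zs : Fin (n - qcount m c P) → M,
        (∀ s, lnL (zs s)) ∧ (∀ s s', s ≠ s' → zs s ≠ zs s') ∧
        ∀ s i, incL (a (P i)) (zs s) := by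
  rw [guardL, if_pos hP, BoundedFormula.realize_not, realize_exsAux]
  exact not_congr (exists_congr fun zs => realize_innerL)

lemma realize_guardL_top {m n : ℕ} {c : Config} {P : Fin m → Fin c.j}
    (hP : ¬(Function.Injective P ∧ ∀ i, c.pt (Fin.castAdd c.k (P i)) = true))
    {v : Empty → M} {a : Fin c.j → M} :
    (guardL m n c P).Realize v a := by
  rw [guardL, if_neg hP]
  exact BoundedFormula.realize_top.2 trivial

def sigmaF (m n : ℕ) (c : Config) : IncLang.Sentence :=
  ((thetaF c ⊓ (allConj (guardP m n c) ⊓ allConj (guardL m n c))).imp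
    (exsAux c.k (fullF c))).alls

lemma realize_sigmaF {m n : ℕ} {c : Config} :
    M ⊨ sigmaF m n c ↔ ∀ a : Fin c.j → M,
      ((thetaF c).Realize default a ∧ (∀ L, (guardP m n c L).Realize default a) ∧
       (∀ P, (guardL m n c P).Realize default a)) →
        ∃ ys : Fin c.k → M, (fullF c).Realize default (Fin.append a ys) := by
  have : (M ⊨ sigmaF m n c) ↔ ∀ a : Fin c.j → M,
      ((thetaF c ⊓ (allConj (guardP m n c) ⊓ allConj (guardL m n c))).imp
        (exsAux c.k (fullF c))).Realize (default : Empty → M) a :=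
    BoundedFormula.realize_alls
  rw [this]
  refine forall_congr' fun a => ?_
  rw [BoundedFormula.realize_imp, BoundedFormula.realize_inf, BoundedFormula.realize_inf,
    realize_allConj, realize_allConj, realize_exsAux]

def ax1 : IncLang.Sentence := (ptA (vT 0) ⊔ lnA (vT (0 : Fin 1))).alls
def ax2 : IncLang.Sentence := ((ptA (vT 0) ⊓ lnA (vT (0 : Fin 1))).not).alls
def ax3 : IncLang.Sentence :=
  ((incA (vT 0) (vT (1 : Fin 2))).imp (ptA (vT 0) ⊓ lnA (vT 1))).alls

lemma realize_ax1 : M ⊨ ax1 ↔ ∀ x : M, ptL x ∨ lnL x := by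
  have : (M ⊨ ax1) ↔ ∀ xs : Fin 1 → M,
      (ptA (vT 0) ⊔ lnA (vT (0 : Fin 1))).Realize (default : Empty → M) xs :=
    BoundedFormula.realize_alls
  rw [this]
  constructor
  · intro h x
    have := h (fun _ => x)
    rwa [BoundedFormula.realize_sup, realize_ptA, realize_lnA] at this
  · intro h xs
    rw [BoundedFormula.realize_sup, realize_ptA, realize_lnA]
    exact h _

lemma realize_ax2 : M ⊨ ax2 ↔ ∀ x : M, ¬(ptL x ∧ lnL x) := by
  have : (M ⊨ ax2) ↔ ∀ xs : Fin 1 → M,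
      ((ptA (vT 0) ⊓ lnA (vT (0 : Fin 1))).not).Realize (default : Empty → M) xs :=
    BoundedFormula.realize_alls
  rw [this]
  constructor
  · intro h x
    have := h (fun _ => x)
    rwa [BoundedFormula.realize_not, BoundedFormula.realize_inf, realize_ptA, realize_lnA]
      at this
  · intro h xs
    rw [BoundedFormula.realize_not, BoundedFormula.realize_inf, realize_ptA, realize_lnA]
    exact h _

lemma realize_ax3 : M ⊨ ax3 ↔ ∀ x y : M, incL x y → ptL x ∧ lnL y := by
  have : (M ⊨ ax3) ↔ ∀ xs : Fin 2 → M,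
      ((incA (vT 0) (vT (1 : Fin 2))).imp (ptA (vT 0) ⊓ lnA (vT 1))).Realize
        (default : Empty → M) xs :=
    BoundedFormula.realize_alls
  rw [this]
  constructor
  · intro h x y
    have := h ![x, y]
    rw [BoundedFormula.realize_imp, BoundedFormula.realize_inf, realize_ptA, realize_lnA,
      realize_incA] at this
    simpa using this
  · intro h xs
    rw [BoundedFormula.realize_imp, BoundedFormula.realize_inf, realize_ptA, realize_lnA,
      realize_incA]
    exact h _ _

def axK (m n : ℕ) : IncLang.Sentence :=
  (exsAux (j := 0) (m + n)
    (finConj m (fun i => ptA (vT (Fin.natAdd 0 (Fin.castAdd n i)))) ⊓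
     (finConj n (fun i => lnA (vT (Fin.natAdd 0 (Fin.natAdd m i)))) ⊓
      (distinctConj m (fun i => vT (Fin.natAdd 0 (Fin.castAdd n i))) ⊓
       (distinctConj n (fun i => vT (Fin.natAdd 0 (Fin.natAdd m i))) ⊓
        finConj m (fun i => finConj n (fun i' =>
          incA (vT (Fin.natAdd 0 (Fin.castAdd n i)))
               (vT (Fin.natAdd 0 (Fin.natAdd m i')))))))))).not

lemma realize_axK {m n : ℕ} : M ⊨ axK m n ↔ KFreeL m n M := by
  have h0 : (M ⊨ axK m n) ↔ ((exsAux (j := 0) (m + n) _).not).Realize (default : Empty → M)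
      (default : Fin 0 → M) := Iff.rfl
  rw [h0, BoundedFormula.realize_not, realize_exsAux, KFreeL]
  apply not_congr
  constructor
  · rintro ⟨ys, h⟩
    rw [BoundedFormula.realize_inf, BoundedFormula.realize_inf, BoundedFormula.realize_inf,
      BoundedFormula.realize_inf] at h
    obtain ⟨h1, h2, h3, h4, h5⟩ := h
    simp only [realize_finConj, realize_distinctConj, realize_ptA, realize_lnA, realize_incA,
      realize_vT, Fin.append_right] at h1 h2 h3 h4 h5
    refine ⟨fun i => ys (Fin.castAdd n i), fun i => ys (Fin.natAdd m i), ?_, ?_,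
      fun i => h1 i, fun i => h2 i, fun i i' => h5 i i'⟩
    · intro i i' hii
      by_contra hne
      exact h3 i i' hne hii
    · intro i i' hii
      by_contra hne
      exact h4 i i' hne hii
  · rintro ⟨a, b, ha, hb, hpa, hlb, hab⟩
    refine ⟨Fin.append a b, ?_⟩
    rw [BoundedFormula.realize_inf, BoundedFormula.realize_inf, BoundedFormula.realize_inf,
      BoundedFormula.realize_inf]
    simp only [realize_finConj, realize_distinctConj, realize_ptA, realize_lnA, realize_incA,
      realize_vT, Fin.append_right, Fin.append_left]
    exact ⟨fun i => hpa i, fun i => hlb i,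
      fun i i' hii hc => hii (ha hc), fun i i' hii hc => hii (hb hc),
      fun i i' => hab i i'⟩

def theoryT (m n : ℕ) : IncLang.Theory :=
  {ax1, ax2, ax3, axK m n} ∪ { σ | ∃ c : Config, c.Valid m n ∧ σ = sigmaF m n c }

end IncAux
namespace IncAux

variable {M : Type u} [IncLang.Structure M]

lemma vec_one {β : Type*} (x : Fin 1 → β) : ![x 0] = x := by
  funext i; fin_cases i; rfl

lemma vec_two {β : Type*} (x : Fin 2 → β) : ![x 0, x 1] = x := by
  funext i; fin_cases i <;> rfl

lemma fin_add_cases {j k : ℕ} (u : Fin (j + k)) :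
    (∃ l : Fin j, u = Fin.castAdd k l) ∨ (∃ t : Fin k, u = Fin.natAdd j t) :=
  Fin.addCases (motive := fun u => (∃ l : Fin j, u = Fin.castAdd k l) ∨
    (∃ t : Fin k, u = Fin.natAdd j t)) (fun l => Or.inl ⟨l, rfl⟩) (fun t => Or.inr ⟨t, rfl⟩) u

lemma castAdd_ne_natAdd {j k : ℕ} (l : Fin j) (t : Fin k) :
    Fin.castAdd k l ≠ Fin.natAdd j t := by
  intro h
  have := congrArg Fin.val h
  simp only [Fin.coe_castAdd, Fin.coe_natAdd] at this
  omega

/-- the parameterized diagram of a configuration over parameters from `M` -/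
def pdiag (c : Config) (a : Fin c.j → M) : BF M c.k :=
  cdiag (c.j + c.k) c.pt c.inc
    (fun u => Fin.append (fun l => pT (a l)) (fun t => vT t) u)

lemma isQF_pdiag (c : Config) (a : Fin c.j → M) : (pdiag c a).IsQF := isQF_cdiag _ _ _ _

lemma realize_pdiag {c : Config} {a : Fin c.j → M} {W : Type u} [IncLang.Structure W]
    {g : M → W} {ys : Fin c.k → W} :
    (pdiag c a).Realize g ys ↔
      ((∀ u, (ptL (Fin.append (fun l => g (a l)) ys u) ↔ c.pt u = true) ∧
             (lnL (Fin.append (fun l => g (a l)) ys u) ↔ c.pt u = false)) ∧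
       (∀ u w, u ≠ w → Fin.append (fun l => g (a l)) ys u ≠
          Fin.append (fun l => g (a l)) ys w) ∧
       (∀ u w, incL (Fin.append (fun l => g (a l)) ys u)
          (Fin.append (fun l => g (a l)) ys w) ↔ c.inc u w = true)) := by
  rw [pdiag, realize_cdiag]
  have he : ∀ u, ((Fin.append (fun l => pT (a l)) (fun t => vT t) u).realize
       (Sum.elim g ys) : W) = Fin.append (fun l => g (a l)) ys u := by
    intro u
    rcases fin_add_cases u with ⟨l, rfl⟩ | ⟨t, rfl⟩
    · rw [Fin.append_left, Fin.append_left]; rfl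
    · rw [Fin.append_right, Fin.append_right]; rfl
  simp only [he]

section Amalg

variable (c : Config) (a : Fin c.j → M)

def ptN : M ⊕ Fin c.k → Prop :=
  Sum.elim ptL (fun t => c.pt (Fin.natAdd c.j t) = true)

def lnN : M ⊕ Fin c.k → Prop :=
  Sum.elim lnL (fun t => c.pt (Fin.natAdd c.j t) = false)

def incN : M ⊕ Fin c.k → M ⊕ Fin c.k → Prop
  | Sum.inl x, Sum.inl y => incL x y
  | Sum.inl x, Sum.inr t => ∃ l, x = a l ∧ c.inc (Fin.castAdd c.k l) (Fin.natAdd c.j t) = true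
  | Sum.inr t, Sum.inl y => ∃ l, y = a l ∧ c.inc (Fin.natAdd c.j t) (Fin.castAdd c.k l) = true
  | Sum.inr t, Sum.inr t' => c.inc (Fin.natAdd c.j t) (Fin.natAdd c.j t') = true

def amalgStr : IncLang.Structure (M ⊕ Fin c.k) where
  funMap := fun {_} f _ => f.elim
  RelMap := fun {_} r =>
    match r with
    | IncRel.pt => fun x => ptN c (x 0)
    | IncRel.lin => fun x => lnN c (x 0)
    | IncRel.inc => fun x => incN c a (x 0) (x 1)

lemma amalg_ptL (z : M ⊕ Fin c.k) : @ptL _ (amalgStr c a) z ↔ ptN c z := Iff.rfl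
lemma amalg_lnL (z : M ⊕ Fin c.k) : @lnL _ (amalgStr c a) z ↔ lnN c z := Iff.rfl
lemma amalg_incL (z w : M ⊕ Fin c.k) : @incL _ (amalgStr c a) z w ↔ incN c a z w := Iff.rfl

def amalgEmb : @Language.Embedding IncLang M (M ⊕ Fin c.k) _ (amalgStr c a) :=
  letI : IncLang.Structure (M ⊕ Fin c.k) := amalgStr c a
  { toFun := Sum.inl
    inj' := Sum.inl_injective
    map_fun' := fun {_} f _ => f.elim
    map_rel' := fun {_} r x => by
      cases r
      · rw [show x = ![x 0] from (vec_one x).symm]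
        exact Iff.rfl
      · rw [show x = ![x 0] from (vec_one x).symm]
        exact Iff.rfl
      · rw [show x = ![x 0, x 1] from (vec_two x).symm]
        exact Iff.rfl }

end Amalg

end IncAux
namespace IncAux

variable {M : Type u} [IncLang.Structure M]

section Sound

variable {m n : ℕ} {c : Config} {a : Fin c.j → M}

/-- canonical enumeration of the configuration inside the amalgam -/
def eN (c : Config) (a : Fin c.j → M) : Fin (c.j + c.k) → M ⊕ Fin c.k :=
  Fin.append (fun l => Sum.inl (a l)) Sum.inr

lemma eN_inj (hdist : ∀ l l', l ≠ l' → a l ≠ a l') : Function.Injective (eN c a) := by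
  have ainj : Function.Injective a := fun l l' h => by
    by_contra hne; exact hdist l l' hne h
  intro u w h
  rcases fin_add_cases u with ⟨l, rfl⟩ | ⟨t, rfl⟩ <;>
    rcases fin_add_cases w with ⟨l', rfl⟩ | ⟨t', rfl⟩ <;>
    simp only [eN, Fin.append_left, Fin.append_right] at h
  · rw [ainj (Sum.inl_injective h)]
  · exact absurd h (by simp)
  · exact absurd h (by simp)
  · rw [Sum.inr_injective h]

lemma eN_pt (hst : ∀ l, (ptL (a l) ↔ c.pt (Fin.castAdd c.k l) = true) ∧
      (lnL (a l) ↔ c.pt (Fin.castAdd c.k l) = false)) (u : Fin (c.j + c.k)) :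
    (ptN c (eN c a u) ↔ c.pt u = true) ∧ (lnN c (eN c a u) ↔ c.pt u = false) := by
  rcases fin_add_cases u with ⟨l, rfl⟩ | ⟨t, rfl⟩
  · rw [show eN c a (Fin.castAdd c.k l) = Sum.inl (a l) from Fin.append_left _ _ _]
    exact hst l
  · rw [show eN c a (Fin.natAdd c.j t) = Sum.inr t from Fin.append_right _ _ _]
    exact ⟨Iff.rfl, Iff.rfl⟩

lemma eN_inc (hdist : ∀ l l', l ≠ l' → a l ≠ a l')
    (hinc : ∀ l l', incL (a l) (a l') ↔
      c.inc (Fin.castAdd c.k l) (Fin.castAdd c.k l') = true)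
    (u w : Fin (c.j + c.k)) :
    incN c a (eN c a u) (eN c a w) ↔ c.inc u w = true := by
  have ainj : Function.Injective a := fun l l' h => by
    by_contra hne; exact hdist l l' hne h
  rcases fin_add_cases u with ⟨l, rfl⟩ | ⟨t, rfl⟩ <;>
    rcases fin_add_cases w with ⟨l', rfl⟩ | ⟨t', rfl⟩ <;>
    simp only [eN, Fin.append_left, Fin.append_right]
  · exact hinc l l'
  · show (∃ l', a l = a l' ∧ _) ↔ _
    constructor
    · rintro ⟨l'', h1, h2⟩
      rwa [ainj h1]
    · intro h; exact ⟨l, rfl, h⟩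
  · show (∃ l'', a l' = a l'' ∧ _) ↔ _
    constructor
    · rintro ⟨l'', h1, h2⟩
      rwa [ainj h1]
    · intro h; exact ⟨l', rfl, h⟩
  · exact Iff.rfl

lemma amalg_isIncidence (hM : IsIncidenceL M)
    (hv1 : ∀ u w, c.inc u w = true → c.pt u = true ∧ c.pt w = false)
    (hst : ∀ l, (ptL (a l) ↔ c.pt (Fin.castAdd c.k l) = true) ∧
      (lnL (a l) ↔ c.pt (Fin.castAdd c.k l) = false)) :
    @IsIncidenceL (M ⊕ Fin c.k) (amalgStr c a) := by
  letI : IncLang.Structure (M ⊕ Fin c.k) := amalgStr c a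
  refine ⟨?_, ?_, ?_⟩
  · rintro (x | t)
    · rcases hM.1 x with h | h
      · exact Or.inl ((amalg_ptL c a _).mpr h)
      · exact Or.inr ((amalg_lnL c a _).mpr h)
    · cases hcase : c.pt (Fin.natAdd c.j t)
      · exact Or.inr ((amalg_lnL c a _).mpr hcase)
      · exact Or.inl ((amalg_ptL c a _).mpr hcase)
  · rintro (x | t) ⟨hp, hl⟩
    · exact hM.2.1 x ⟨(amalg_ptL c a _).mp hp, (amalg_lnL c a _).mp hl⟩
    · have h1 : c.pt (Fin.natAdd c.j t) = true := (amalg_ptL c a _).mp hp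
      have h2 : c.pt (Fin.natAdd c.j t) = false := (amalg_lnL c a _).mp hl
      rw [h1] at h2
      exact absurd h2 (by simp)
  · rintro (x | t) (y | t') hzw
    · have h := (amalg_incL c a _ _).mp hzw
      obtain ⟨h1, h2⟩ := hM.2.2 x y h
      exact ⟨(amalg_ptL c a _).mpr h1, (amalg_lnL c a _).mpr h2⟩
    · obtain ⟨l, rfl, hci⟩ := (amalg_incL c a _ _).mp hzw
      obtain ⟨h1, h2⟩ := hv1 _ _ hci
      exact ⟨(amalg_ptL c a _).mpr ((hst l).1.mpr h1), (amalg_lnL c a _).mpr h2⟩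
    · obtain ⟨l, rfl, hci⟩ := (amalg_incL c a _ _).mp hzw
      obtain ⟨h1, h2⟩ := hv1 _ _ hci
      exact ⟨(amalg_ptL c a _).mpr h1, (amalg_lnL c a _).mpr ((hst l).2.mpr h2)⟩
    · obtain ⟨h1, h2⟩ := hv1 _ _ ((amalg_incL c a _ _).mp hzw)
      exact ⟨(amalg_ptL c a _).mpr h1, (amalg_lnL c a _).mpr h2⟩

/-- extraction of "old" elements from a tuple in the amalgam -/
lemma extract_fun {k' r q : ℕ} {T : Finset (Fin k')} (hT : T.card = q)
    (B : Fin r → M ⊕ Fin k') (hBinj : Function.Injective B)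
    (hnew : ∀ i t, B i = Sum.inr t → t ∈ T) :
    ∃ g : Fin (r - q) → M, (∀ s s', s ≠ s' → g s ≠ g s') ∧
      ∀ s, ∃ i, B i = Sum.inl (g s) := by
  classical
  set sF := Finset.univ.filter (fun i : Fin r => ∃ y, B i = Sum.inl y) with hsF
  have hcompl : (Finset.univ.filter (fun i : Fin r => ¬∃ y, B i = Sum.inl y)).card ≤ q := by
    rw [← hT]
    have hex : ∀ i ∈ Finset.univ.filter (fun i : Fin r => ¬∃ y, B i = Sum.inl y),
        ∃ t, B i = Sum.inr t := by
      intro i hi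
      rcases hBi : B i with y | t
      · exact absurd ⟨y, hBi⟩ (Finset.mem_filter.mp hi).2
      · exact ⟨t, rfl⟩
    rcases Nat.eq_zero_or_pos k' with hk | hk
    · have : (Finset.univ.filter (fun i : Fin r => ¬∃ y, B i = Sum.inl y)) = ∅ := by
        apply Finset.eq_empty_of_forall_notMem
        intro i hi
        obtain ⟨t, _⟩ := hex i hi
        exact absurd t.2 (by omega)
      rw [this]
      simp
    · haveI : Inhabited (Fin k') := ⟨⟨0, hk⟩⟩
      apply Finset.card_le_card_of_injOn
        (fun i => if h : ∃ t, B i = Sum.inr t then h.choose else default)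
      · intro i hi
        obtain ⟨t, ht⟩ := hex i hi
        show (if h : ∃ t, B i = Sum.inr t then h.choose else default) ∈ T
        rw [dif_pos ⟨t, ht⟩]
        exact hnew i _ (⟨t, ht⟩ : ∃ t, B i = Sum.inr t).choose_spec
      · intro i hi i' hi' hii
        obtain ⟨t, ht⟩ := hex i hi
        obtain ⟨t', ht'⟩ := hex i' hi'
        have hii : (if h : ∃ t, B i = Sum.inr t then h.choose else default)
            = (if h : ∃ t, B i' = Sum.inr t then h.choose else default) := hii
        rw [dif_pos ⟨t, ht⟩, dif_pos ⟨t', ht'⟩] at hii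
        apply hBinj
        rw [(⟨t, ht⟩ : ∃ t, B i = Sum.inr t).choose_spec,
          (⟨t', ht'⟩ : ∃ t, B i' = Sum.inr t).choose_spec, hii]
  have hsum : sF.card + (Finset.univ.filter (fun i : Fin r => ¬∃ y, B i = Sum.inl y)).card
      = r := by
    rw [hsF, Finset.card_filter_add_card_filter_not]
    simp
  have hcard : r - q ≤ sF.card := by omega
  obtain ⟨s', hsub, hcardeq⟩ := Finset.exists_subset_card_eq hcard
  have hy : ∀ i : s', ∃ y, B i.1 = Sum.inl y := fun i =>
    (Finset.mem_filter.mp (hsub i.2)).2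
  choose yOf hyOf using hy
  set e := (Finset.equivFinOfCardEq hcardeq).symm with he
  refine ⟨fun s => yOf (e s), ?_, fun s => ⟨(e s).1, hyOf (e s)⟩⟩
  intro s s' hss hcc
  have hcc : yOf (e s) = yOf (e s') := hcc
  apply hss
  have : B (e s).1 = B (e s').1 := by rw [hyOf (e s), hyOf (e s'), hcc]
  have h2 : (e s) = (e s') := Subtype.ext (hBinj this)
  exact (Finset.equivFinOfCardEq hcardeq).symm.injective h2

end Sound

end IncAux
namespace IncAux

variable {M : Type u} [IncLang.Structure M]

section Sound2

variable {m n : ℕ} {c : Config} {a : Fin c.j → M}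

lemma amalg_kfree (hMK : KFreeL m n M) (hv : c.Valid m n)
    (hst : ∀ l, (ptL (a l) ↔ c.pt (Fin.castAdd c.k l) = true) ∧
      (lnL (a l) ↔ c.pt (Fin.castAdd c.k l) = false))
    (hdist : ∀ l l', l ≠ l' → a l ≠ a l')
    (hinc : ∀ l l', incL (a l) (a l') ↔
      c.inc (Fin.castAdd c.k l) (Fin.castAdd c.k l') = true)
    (hgP : ∀ L : Fin n → Fin c.j, Function.Injective L →
      (∀ i, c.pt (Fin.castAdd c.k (L i)) = false) →
      ¬ ∃ zs : Fin (m - pcount n c L) → M, (∀ s, ptL (zs s)) ∧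
        (∀ s s', s ≠ s' → zs s ≠ zs s') ∧ ∀ s i, incL (zs s) (a (L i)))
    (hgL : ∀ P : Fin m → Fin c.j, Function.Injective P →
      (∀ i, c.pt (Fin.castAdd c.k (P i)) = true) →
      ¬ ∃ zs : Fin (n - qcount m c P) → M, (∀ s, lnL (zs s)) ∧
        (∀ s s', s ≠ s' → zs s ≠ zs s') ∧ ∀ s i, incL (a (P i)) (zs s)) :
    @KFreeL m n (M ⊕ Fin c.k) (amalgStr c a) := by
  letI : IncLang.Structure (M ⊕ Fin c.k) := amalgStr c a
  have ainj : Function.Injective a := fun l l' h => by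
    by_contra hne; exact hdist l l' hne h
  rintro ⟨A, B, hAinj, hBinj, hApt, hBln, hAB⟩
  have hApt' : ∀ i, ptN c (A i) := fun i => (amalg_ptL c a _).mp (hApt i)
  have hBln' : ∀ i, lnN c (B i) := fun i => (amalg_lnL c a _).mp (hBln i)
  have hAB' : ∀ i i', incN c a (A i) (B i') := fun i i' => (amalg_incL c a _ _).mp (hAB i i')
  by_cases hA : ∀ i, ∃ x, A i = Sum.inl x
  · by_cases hB : ∀ i', ∃ y, B i' = Sum.inl y
    · -- C1 : everything old
      choose xA hxA using hA
      choose yB hyB using hB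
      apply hMK
      refine ⟨xA, yB, fun i i' h => hAinj (by rw [hxA, hxA, h]),
        fun i i' h => hBinj (by rw [hyB, hyB, h]), ?_, ?_, ?_⟩
      · intro i; have := hApt' i; rwa [hxA i] at this
      · intro i; have := hBln' i; rwa [hyB i] at this
      · intro i i'; have := hAB' i i'; rwa [hxA i, hyB i'] at this
    · -- C4 : all points old, some line new
      push_neg at hB
      obtain ⟨i₀, hi₀⟩ := hB
      obtain ⟨t₀, ht₀⟩ : ∃ t, B i₀ = Sum.inr t := by
        rcases h : B i₀ with y | t
        · exact absurd h (hi₀ y)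
        · exact ⟨t, rfl⟩
      choose xA hxA using hA
      have hP : ∀ i, ∃ l, A i = Sum.inl (a l) ∧
          c.inc (Fin.castAdd c.k l) (Fin.natAdd c.j t₀) = true := by
        intro i
        have := hAB' i i₀
        rw [hxA i, ht₀] at this
        obtain ⟨l, hx, hc⟩ := this
        exact ⟨l, by rw [hxA i, hx], hc⟩
      choose P hPa hPinc using hP
      have hPinj : Function.Injective P := fun i i' h => hAinj (by rw [hPa, hPa, h])
      have hPpt : ∀ i, c.pt (Fin.castAdd c.k (P i)) = true := by
        intro i
        have := hApt' i
        rw [hPa i] at this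
        exact (hst (P i)).1.mp this
      apply hgL P hPinj hPpt
      have hnew : ∀ i' t, B i' = Sum.inr t →
          t ∈ Finset.univ.filter (fun t : Fin c.k => c.pt (Fin.natAdd c.j t) = false ∧
            ∀ i, c.inc (Fin.castAdd c.k (P i)) (Fin.natAdd c.j t) = true) := by
        intro i' t ht
        rw [Finset.mem_filter]
        refine ⟨Finset.mem_univ _, ?_, ?_⟩
        · have := hBln' i'; rwa [ht] at this
        · intro i
          have := hAB' i i'
          rw [hPa i, ht] at this
          obtain ⟨l, hal, hc⟩ := this
          rwa [ainj hal]
      obtain ⟨g, hgdist, hgB⟩ := extract_fun rfl B hBinj hnew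
      refine ⟨g, ?_, hgdist, ?_⟩
      · intro s
        obtain ⟨i', hi'⟩ := hgB s
        have := hBln' i'; rwa [hi'] at this
      · intro s i
        obtain ⟨i', hi'⟩ := hgB s
        have := hAB' i i'
        rwa [hPa i, hi'] at this
  · by_cases hB : ∀ i', ∃ y, B i' = Sum.inl y
    · -- C3 : all lines old, some point new
      push_neg at hA
      obtain ⟨i₀, hi₀⟩ := hA
      obtain ⟨t₀, ht₀⟩ : ∃ t, A i₀ = Sum.inr t := by
        rcases h : A i₀ with x | t
        · exact absurd h (hi₀ x)
        · exact ⟨t, rfl⟩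
      choose yB hyB using hB
      have hL : ∀ i', ∃ l, B i' = Sum.inl (a l) := by
        intro i'
        have := hAB' i₀ i'
        rw [ht₀, hyB i'] at this
        obtain ⟨l, hy, _⟩ := this
        exact ⟨l, by rw [hyB i', hy]⟩
      choose L hLa using hL
      have hLinj : Function.Injective L := fun i i' h => hBinj (by rw [hLa, hLa, h])
      have hLln : ∀ i', c.pt (Fin.castAdd c.k (L i')) = false := by
        intro i'
        have := hBln' i'
        rw [hLa i'] at this
        exact (hst (L i')).2.mp this
      apply hgP L hLinj hLln
      have hnew : ∀ i t, A i = Sum.inr t →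
          t ∈ Finset.univ.filter (fun t : Fin c.k => c.pt (Fin.natAdd c.j t) = true ∧
            ∀ i', c.inc (Fin.natAdd c.j t) (Fin.castAdd c.k (L i')) = true) := by
        intro i t ht
        rw [Finset.mem_filter]
        refine ⟨Finset.mem_univ _, ?_, ?_⟩
        · have := hApt' i; rwa [ht] at this
        · intro i'
          have := hAB' i i'
          rw [ht, hLa i'] at this
          obtain ⟨l, hal, hc⟩ := this
          rwa [ainj hal]
      obtain ⟨g, hgdist, hgA⟩ := extract_fun rfl A hAinj hnew
      refine ⟨g, ?_, hgdist, ?_⟩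
      · intro s
        obtain ⟨i, hi⟩ := hgA s
        have := hApt' i; rwa [hi] at this
      · intro s i'
        obtain ⟨i, hi⟩ := hgA s
        have := hAB' i i'
        rwa [hi, hLa i'] at this
    · -- C2 : new point and new line present
      push_neg at hA
      push_neg at hB
      obtain ⟨iA, hiA⟩ := hA
      obtain ⟨iB, hiB⟩ := hB
      obtain ⟨tA, htA⟩ : ∃ t, A iA = Sum.inr t := by
        rcases h : A iA with x | t
        · exact absurd h (hiA x)
        · exact ⟨t, rfl⟩
      obtain ⟨tB, htB⟩ : ∃ t, B iB = Sum.inr t := by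
        rcases h : B iB with y | t
        · exact absurd h (hiB y)
        · exact ⟨t, rfl⟩
      have hu : ∀ i, ∃ u, A i = eN c a u := by
        intro i
        rcases h : A i with x | t
        · have := hAB' i iB
          rw [h, htB] at this
          obtain ⟨l, hx, _⟩ := this
          exact ⟨Fin.castAdd c.k l, by
            rw [hx]
            exact (show eN c a (Fin.castAdd c.k l) = Sum.inl (a l) from
              Fin.append_left _ _ _).symm⟩
        · exact ⟨Fin.natAdd c.j t, (show eN c a (Fin.natAdd c.j t) = Sum.inr t from
            Fin.append_right _ _ _).symm⟩
      have hw : ∀ i', ∃ u, B i' = eN c a u := by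
        intro i'
        rcases h : B i' with y | t
        · have := hAB' iA i'
          rw [h, htA] at this
          obtain ⟨l, hy, _⟩ := this
          exact ⟨Fin.castAdd c.k l, by
            rw [hy]
            exact (show eN c a (Fin.castAdd c.k l) = Sum.inl (a l) from
              Fin.append_left _ _ _).symm⟩
        · exact ⟨Fin.natAdd c.j t, (show eN c a (Fin.natAdd c.j t) = Sum.inr t from
            Fin.append_right _ _ _).symm⟩
      choose P hP using hu
      choose Lf hLf using hw
      apply hv.2
      refine ⟨P, Lf, ?_, ?_, ?_, ?_, ?_⟩
      · intro i i' h
        apply hAinj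
        rw [hP, hP, h]
      · intro i i' h
        apply hBinj
        rw [hLf, hLf, h]
      · intro i
        have := hApt' i
        rw [hP i] at this
        exact (eN_pt hst _).1.mp this
      · intro i
        have := hBln' i
        rw [hLf i] at this
        exact (eN_pt hst _).2.mp this
      · intro i i'
        have := hAB' i i'
        rw [hP i, hLf i'] at this
        exact (eN_inc hdist hinc _ _).mp this

end Sound2

lemma amalgEmb_apply (c : Config) (a : Fin c.j → M) (x : M) :
    (amalgEmb c a) x = Sum.inl x := rfl

theorem models_of_isECL {m n : ℕ} (M : Type u) [IncLang.Structure M]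
    (h : IsECL m n M) : M ⊨ theoryT m n := by
  rw [Theory.model_iff]
  intro φ hφ
  rcases hφ with hbase | hσ
  · simp only [Set.mem_insert_iff, Set.mem_singleton_iff] at hbase
    rcases hbase with rfl | rfl | rfl | rfl
    · exact realize_ax1.mpr h.1.1
    · exact realize_ax2.mpr h.1.2.1
    · exact realize_ax3.mpr h.1.2.2
    · exact realize_axK.mpr h.2.1
  · obtain ⟨c, hv, rfl⟩ := hσ
    rw [realize_sigmaF]
    rintro a ⟨hθ, hGP, hGL⟩
    rw [realize_thetaF] at hθ
    obtain ⟨hst, hdist, hinc⟩ := hθ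
    letI : IncLang.Structure (M ⊕ Fin c.k) := amalgStr c a
    have hNinc : IsIncidenceL (M ⊕ Fin c.k) := amalg_isIncidence h.1 hv.1 hst
    have hNK : KFreeL m n (M ⊕ Fin c.k) := by
      refine amalg_kfree h.2.1 hv hst hdist hinc ?_ ?_
      · intro L hLinj hLln
        have := hGP L
        rwa [realize_guardP ⟨hLinj, hLln⟩] at this
      · intro P hPinj hPpt
        have := hGL P
        rwa [realize_guardL ⟨hPinj, hPpt⟩] at this
    have hreal : ∃ xs : Fin c.k → (M ⊕ Fin c.k),
        (pdiag c a).Realize ((amalgEmb c a : M → M ⊕ Fin c.k)) xs := by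
      refine ⟨Sum.inr, ?_⟩
      rw [realize_pdiag]
      have heq : (Fin.append (fun l => (amalgEmb c a) (a l)) Sum.inr) = eN c a := rfl
      rw [heq]
      refine ⟨fun u => eN_pt hst u, ?_, fun u w => eN_inc hdist hinc u w⟩
      intro u w huw hc
      exact huw (eN_inj hdist hc)
    obtain ⟨ys, hys⟩ := h.2.2 (M ⊕ Fin c.k) hNinc hNK (amalgEmb c a) c.k (pdiag c a)
      (isQF_pdiag c a) hreal
    rw [realize_pdiag] at hys
    refine ⟨ys, ?_⟩
    rw [realize_fullF]
    exact hys

end IncAux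
namespace IncAux

variable {M : Type u} [IncLang.Structure M]

lemma term_eq_var {β : Type*} (t : IncLang.Term β) : ∃ b, t = Term.var b := by
  cases t with
  | var b => exact ⟨b, rfl⟩
  | func f ts => exact Empty.elim f

lemma relMap_pt_iff {W : Type*} [IncLang.Structure W] (t : Fin 1 → W) :
    Structure.RelMap (L := IncLang) IncRel.pt t ↔ ptL (t 0) := by
  rw [ptL, vec_one]

lemma relMap_lin_iff {W : Type*} [IncLang.Structure W] (t : Fin 1 → W) :
    Structure.RelMap (L := IncLang) IncRel.lin t ↔ lnL (t 0) := by
  rw [lnL, vec_one]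

lemma relMap_inc_iff {W : Type*} [IncLang.Structure W] (t : Fin 2 → W) :
    Structure.RelMap (L := IncLang) IncRel.inc t ↔ incL (t 0) (t 1) := by
  rw [incL, vec_two]

lemma qf_transfer [DecidableEq M] {N : Type v} [IncLang.Structure N] {k : ℕ}
    (g : M → N) (xsM : Fin k → M) (xsN : Fin k → N) (s₀ : Finset M)
    (HEq : ∀ z w : M ⊕ Fin k, Sum.elim (· ∈ s₀) (fun _ => True) z →
      Sum.elim (· ∈ s₀) (fun _ => True) w →
      (Sum.elim id xsM z = Sum.elim id xsM w ↔ Sum.elim g xsN z = Sum.elim g xsN w))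
    (HPt : ∀ z : M ⊕ Fin k, Sum.elim (· ∈ s₀) (fun _ => True) z →
      (ptL (Sum.elim id xsM z) ↔ ptL (Sum.elim g xsN z)))
    (HLn : ∀ z : M ⊕ Fin k, Sum.elim (· ∈ s₀) (fun _ => True) z →
      (lnL (Sum.elim id xsM z) ↔ lnL (Sum.elim g xsN z)))
    (HInc : ∀ z w : M ⊕ Fin k, Sum.elim (· ∈ s₀) (fun _ => True) z →
      Sum.elim (· ∈ s₀) (fun _ => True) w →
      (incL (Sum.elim id xsM z) (Sum.elim id xsM w) ↔
        incL (Sum.elim g xsN z) (Sum.elim g xsN w)))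
    {φ : BF M k} (hQF : φ.IsQF) :
    φ.freeVarFinset ⊆ s₀ → (φ.Realize id xsM ↔ φ.Realize g xsN) := by
  have okvar : ∀ (b : M ⊕ Fin k), (Term.var b : IncLang.Term (M ⊕ Fin k)).varFinsetLeft ⊆ s₀ →
      Sum.elim (· ∈ s₀) (fun _ => True) b := by
    rintro (a | i) hsub
    · exact hsub (by simp [Term.varFinsetLeft])
    · trivial
  induction hQF with
  | falsum =>
    intro _
    simp [BoundedFormula.Realize]
  | of_isAtomic h =>
    cases h with
    | equal t₁ t₂ =>
      intro hsub
      have hsub' : t₁.varFinsetLeft ∪ t₂.varFinsetLeft ⊆ s₀ := hsub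
      obtain ⟨b₁, rfl⟩ := term_eq_var t₁
      obtain ⟨b₂, rfl⟩ := term_eq_var t₂
      rw [BoundedFormula.realize_bdEqual, BoundedFormula.realize_bdEqual]
      exact HEq b₁ b₂
        (okvar b₁ ((Finset.union_subset_iff.mp hsub').1))
        (okvar b₂ ((Finset.union_subset_iff.mp hsub').2))
    | @rel ll R ts =>
      intro hsub
      have hsub' : (Finset.univ.biUnion fun i => (ts i).varFinsetLeft) ⊆ s₀ := hsub
      have hok : ∀ (i : Fin ll) (b : M ⊕ Fin k), ts i = Term.var b →
          Sum.elim (· ∈ s₀) (fun _ => True) b := by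
        intro i b hb
        apply okvar
        intro a ha
        apply hsub'
        rw [Finset.mem_biUnion]
        exact ⟨i, Finset.mem_univ _, by rw [hb]; exact ha⟩
      rw [BoundedFormula.realize_rel, BoundedFormula.realize_rel]
      cases R with
      | pt =>
        obtain ⟨b, hb⟩ := term_eq_var (ts 0)
        rw [relMap_pt_iff, relMap_pt_iff]
        show ptL ((ts 0).realize (Sum.elim id xsM)) ↔ ptL ((ts 0).realize (Sum.elim g xsN))
        rw [hb, Term.realize_var, Term.realize_var]
        exact HPt b (hok 0 b hb)
      | lin =>
        obtain ⟨b, hb⟩ := term_eq_var (ts 0)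
        rw [relMap_lin_iff, relMap_lin_iff]
        show lnL ((ts 0).realize (Sum.elim id xsM)) ↔ lnL ((ts 0).realize (Sum.elim g xsN))
        rw [hb, Term.realize_var, Term.realize_var]
        exact HLn b (hok 0 b hb)
      | inc =>
        obtain ⟨b₁, hb₁⟩ := term_eq_var (ts 0)
        obtain ⟨b₂, hb₂⟩ := term_eq_var (ts 1)
        rw [relMap_inc_iff, relMap_inc_iff]
        show incL ((ts 0).realize (Sum.elim id xsM)) ((ts 1).realize (Sum.elim id xsM)) ↔
          incL ((ts 0).realize (Sum.elim g xsN)) ((ts 1).realize (Sum.elim g xsN))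
        rw [hb₁, hb₂, Term.realize_var, Term.realize_var, Term.realize_var, Term.realize_var]
        exact HInc b₁ b₂ (hok 0 b₁ hb₁) (hok 1 b₂ hb₂)
  | imp h₁ h₂ ih₁ ih₂ =>
    intro hsub
    have hs : _ ∪ _ ⊆ s₀ := hsub
    rw [BoundedFormula.realize_imp, BoundedFormula.realize_imp,
      ih₁ (Finset.union_subset_iff.mp hs).1, ih₂ (Finset.union_subset_iff.mp hs).2]

end IncAux
namespace IncAux

variable {M : Type u} [IncLang.Structure M]

lemma emb_ptL {N : Type v} [IncLang.Structure N] (f : M ↪[IncLang] N) (x : M) :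
    ptL (f x) ↔ ptL x := by
  have h := f.map_rel IncRel.pt ![x]
  rwa [show (⇑f ∘ ![x]) = ![f x] from funext fun i => by fin_cases i <;> rfl] at h

lemma emb_lnL {N : Type v} [IncLang.Structure N] (f : M ↪[IncLang] N) (x : M) :
    lnL (f x) ↔ lnL x := by
  have h := f.map_rel IncRel.lin ![x]
  rwa [show (⇑f ∘ ![x]) = ![f x] from funext fun i => by fin_cases i <;> rfl] at h

lemma emb_incL {N : Type v} [IncLang.Structure N] (f : M ↪[IncLang] N) (x y : M) :
    incL (f x) (f y) ↔ incL x y := by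
  have h := f.map_rel IncRel.inc ![x, y]
  rwa [show (⇑f ∘ ![x, y]) = ![f x, f y] from funext fun i => by fin_cases i <;> rfl] at h

theorem isECL_of_models {m n : ℕ} (M : Type u) [IncLang.Structure M]
    (hT : M ⊨ theoryT m n) : IsECL m n M := by
  classical
  have hmod : ∀ φ ∈ theoryT m n, M ⊨ φ := fun φ hφ => hT.realize_of_mem φ hφ
  have hI : IsIncidenceL M :=
    ⟨realize_ax1.mp (hmod ax1 (Or.inl (by simp))),
     realize_ax2.mp (hmod ax2 (Or.inl (by simp))),
     realize_ax3.mp (hmod ax3 (Or.inl (by simp)))⟩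
  have hK : KFreeL m n M := realize_axK.mp (hmod (axK m n) (Or.inl (by simp)))
  refine ⟨hI, hK, ?_⟩
  intro N instN hNinc hNK f k φ hQF hex
  obtain ⟨xs, hxs⟩ := hex
  -- line/point basic facts in N
  have hNln : ∀ x : N, ¬ptL x → lnL x := fun x h => (hNinc.1 x).resolve_left h
  have hNnpt : ∀ x : N, lnL x → ¬ptL x := fun x h hp => hNinc.2.1 x ⟨hp, h⟩
  -- parameter set
  set s₀ : Finset M := φ.freeVarFinset with hs₀
  set s : Finset M := s₀ ∪ Finset.univ.biUnion
    (fun i : Fin k => if h : ∃ b : M, f b = xs i then {h.choose} else ∅) with hs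
  set j : ℕ := s.card with hj
  set av : Fin j → M := fun l => ((s.equivFin.symm l : s) : M) with hav
  have havinj : Function.Injective av := fun l l' h =>
    s.equivFin.symm.injective (Subtype.coe_injective h)
  -- new elements
  set nf : Finset N := (Finset.univ.filter (fun i : Fin k => ¬∃ b : M, f b = xs i)).image xs
    with hnf
  set k' : ℕ := nf.card with hk'
  set nv : Fin k' → N := fun t => ((nf.equivFin.symm t : nf) : N) with hnv
  have hnvinj : Function.Injective nv := fun t t' h =>
    nf.equivFin.symm.injective (Subtype.coe_injective h)
  have hnfnew : ∀ x ∈ nf, ¬∃ b : M, f b = x := by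
    intro x hx
    rw [hnf, Finset.mem_image] at hx
    obtain ⟨i, hi, rfl⟩ := hx
    rw [Finset.mem_filter] at hi
    exact hi.2
  have hnvnew : ∀ t, ¬∃ b : M, f b = nv t := fun t =>
    hnfnew _ (nf.equivFin.symm t).2
  set EN : Fin (j + k') → N := Fin.append (fun l => f (av l)) nv with hEN
  have hENl : ∀ l, EN (Fin.castAdd k' l) = f (av l) := fun l => Fin.append_left _ _ _
  have hENr : ∀ t, EN (Fin.natAdd j t) = nv t := fun t => Fin.append_right _ _ _
  have hENinj : Function.Injective EN := by
    intro u w h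
    rcases fin_add_cases u with ⟨l, rfl⟩ | ⟨t, rfl⟩ <;>
      rcases fin_add_cases w with ⟨l', rfl⟩ | ⟨t', rfl⟩
    · rw [hENl, hENl] at h
      rw [havinj (f.injective h)]
    · rw [hENl, hENr] at h
      exact absurd ⟨av l, h⟩ (hnvnew t')
    · rw [hENr, hENl] at h
      exact absurd ⟨av l', h.symm⟩ (hnvnew t)
    · rw [hENr, hENr] at h
      rw [hnvinj h]
  -- the configuration
  set cfg : Config := ⟨j, k', fun u => decide (ptL (EN u)),
    fun u w => decide (incL (EN u) (EN w))⟩ with hcfg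
  have hvalid : cfg.Valid m n := by
    constructor
    · intro u w hinc
      have h1 : incL (EN u) (EN w) := of_decide_eq_true hinc
      obtain ⟨hp, hl⟩ := hNinc.2.2 _ _ h1
      exact ⟨decide_eq_true hp, decide_eq_false (hNnpt _ hl)⟩
    · rintro ⟨P, Lf, hPinj, hLinj, hPpt, hLln, hPL⟩
      apply hNK
      refine ⟨fun i => EN (P i), fun i => EN (Lf i),
        fun i i' h => hPinj (hENinj h), fun i i' h => hLinj (hENinj h), ?_, ?_, ?_⟩
      · exact fun i => of_decide_eq_true (hPpt i)
      · intro i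
        apply hNln
        rw [← decide_eq_false_iff_not]
        exact hLln i
      · exact fun i i' => of_decide_eq_true (hPL i i')
  -- theta is realized in M by av
  have hθ : (thetaF cfg).Realize (default : Empty → M) av := by
    rw [realize_thetaF]
    refine ⟨?_, fun l l' hne => fun h => hne (havinj h), ?_⟩
    · intro l
      constructor
      · show ptL (av l) ↔ decide (ptL (EN (Fin.castAdd k' l))) = true
        rw [decide_eq_true_eq, hENl, emb_ptL]
      · show lnL (av l) ↔ decide (ptL (EN (Fin.castAdd k' l))) = false
        rw [decide_eq_false_iff_not, hENl, emb_ptL]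
        exact ⟨fun h hp => hI.2.1 _ ⟨hp, h⟩, fun h => (hI.1 _).resolve_left h⟩
    · intro l l'
      show incL (av l) (av l') ↔ decide (incL (EN (Fin.castAdd k' l)) (EN (Fin.castAdd k' l'))) = true
      rw [decide_eq_true_eq, hENl, hENl, emb_incL]
  -- the guards are realized in M by av
  have hgp : ∀ L : Fin n → Fin cfg.j, (guardP m n cfg L).Realize (default : Empty → M) av := by
    intro L
    by_cases hcL : Function.Injective L ∧ ∀ i, cfg.pt (Fin.castAdd cfg.k (L i)) = false
    · rw [realize_guardP hcL]
      rintro ⟨zs, hzpt, hzdist, hzinc⟩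
      set T : Finset (Fin k') := Finset.univ.filter
        (fun t : Fin k' => cfg.pt (Fin.natAdd cfg.j t) = true ∧
          ∀ i, cfg.inc (Fin.natAdd cfg.j t) (Fin.castAdd cfg.k (L i)) = true) with hTdef
      have hTcard : T.card = pcount n cfg L := rfl
      have hzinj : Function.Injective zs := fun a b h => by
        by_contra hne; exact hzdist a b hne h
      set PS : Finset N :=
        (Finset.univ.image (fun s' : Fin (m - pcount n cfg L) => f (zs s'))) ∪ T.image nv
        with hPS
      have hdisj : Disjoint
          (Finset.univ.image (fun s' : Fin (m - pcount n cfg L) => f (zs s'))) (T.image nv) := by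
        rw [Finset.disjoint_left]
        intro x hx1 hx2
        rw [Finset.mem_image] at hx1 hx2
        obtain ⟨s', _, rfl⟩ := hx1
        obtain ⟨t, _, hteq⟩ := hx2
        exact hnvnew t ⟨zs s', hteq.symm⟩
      have hcard : m ≤ PS.card := by
        rw [hPS, Finset.card_union_of_disjoint hdisj,
          Finset.card_image_of_injective _ (fun a b h => hzinj (f.injective h)),
          Finset.card_image_of_injective _ hnvinj, Finset.card_univ, Fintype.card_fin, hTcard]
        omega
      obtain ⟨S', hS'sub, hS'card⟩ := Finset.exists_subset_card_eq hcard
      set A : Fin m → N := fun i => (((Finset.equivFinOfCardEq hS'card).symm i : S') : N)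
        with hA
      have hAinj : Function.Injective A := fun i i' h =>
        (Finset.equivFinOfCardEq hS'card).symm.injective (Subtype.coe_injective h)
      have hAPS : ∀ i, A i ∈ PS := fun i => hS'sub ((Finset.equivFinOfCardEq hS'card).symm i).2
      have hprop : ∀ x ∈ PS, ptL x ∧ ∀ i', incL x (f (av (L i'))) := by
        intro x hx
        rw [hPS, Finset.mem_union, Finset.mem_image, Finset.mem_image] at hx
        rcases hx with ⟨s', _, rfl⟩ | ⟨t, htT, rfl⟩
        · exact ⟨(emb_ptL f _).mpr (hzpt s'), fun i' => (emb_incL f _ _).mpr (hzinc s' i')⟩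
        · rw [hTdef, Finset.mem_filter] at htT
          constructor
          · have := htT.2.1
            rw [show cfg.pt (Fin.natAdd cfg.j t) = decide (ptL (EN (Fin.natAdd j t))) from rfl,
              decide_eq_true_eq, hENr] at this
            exact this
          · intro i'
            have := htT.2.2 i'
            rw [show cfg.inc (Fin.natAdd cfg.j t) (Fin.castAdd cfg.k (L i'))
                = decide (incL (EN (Fin.natAdd j t)) (EN (Fin.castAdd k' (L i')))) from rfl,
              decide_eq_true_eq, hENr, hENl] at this
            exact this
      apply hNK
      refine ⟨A, fun i' => f (av (L i')), hAinj,
        fun i i' h => hcL.1 (havinj (f.injective h)), ?_, ?_, ?_⟩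
      · exact fun i => (hprop _ (hAPS i)).1
      · intro i'
        apply hNln
        have := hcL.2 i'
        rw [show cfg.pt (Fin.castAdd cfg.k (L i')) = decide (ptL (EN (Fin.castAdd k' (L i'))))
            from rfl, decide_eq_false_iff_not, hENl] at this
        exact this
      · exact fun i i' => (hprop _ (hAPS i)).2 i'
    · exact realize_guardP_top hcL
  have hgl : ∀ P : Fin m → Fin cfg.j, (guardL m n cfg P).Realize (default : Empty → M) av := by
    intro P
    by_cases hcP : Function.Injective P ∧ ∀ i, cfg.pt (Fin.castAdd cfg.k (P i)) = true
    · rw [realize_guardL hcP]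
      rintro ⟨zs, hzln, hzdist, hzinc⟩
      set T : Finset (Fin k') := Finset.univ.filter
        (fun t : Fin k' => cfg.pt (Fin.natAdd cfg.j t) = false ∧
          ∀ i, cfg.inc (Fin.castAdd cfg.k (P i)) (Fin.natAdd cfg.j t) = true) with hTdef
      have hTcard : T.card = qcount m cfg P := rfl
      have hzinj : Function.Injective zs := fun a b h => by
        by_contra hne; exact hzdist a b hne h
      set PS : Finset N :=
        (Finset.univ.image (fun s' : Fin (n - qcount m cfg P) => f (zs s'))) ∪ T.image nv
        with hPS
      have hdisj : Disjoint
          (Finset.univ.image (fun s' : Fin (n - qcount m cfg P) => f (zs s'))) (T.image nv) := by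
        rw [Finset.disjoint_left]
        intro x hx1 hx2
        rw [Finset.mem_image] at hx1 hx2
        obtain ⟨s', _, rfl⟩ := hx1
        obtain ⟨t, _, hteq⟩ := hx2
        exact hnvnew t ⟨zs s', hteq.symm⟩
      have hcard : n ≤ PS.card := by
        rw [hPS, Finset.card_union_of_disjoint hdisj,
          Finset.card_image_of_injective _ (fun a b h => hzinj (f.injective h)),
          Finset.card_image_of_injective _ hnvinj, Finset.card_univ, Fintype.card_fin, hTcard]
        omega
      obtain ⟨S', hS'sub, hS'card⟩ := Finset.exists_subset_card_eq hcard
      set B : Fin n → N := fun i => (((Finset.equivFinOfCardEq hS'card).symm i : S') : N)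
        with hB
      have hBinj : Function.Injective B := fun i i' h =>
        (Finset.equivFinOfCardEq hS'card).symm.injective (Subtype.coe_injective h)
      have hBPS : ∀ i, B i ∈ PS := fun i => hS'sub ((Finset.equivFinOfCardEq hS'card).symm i).2
      have hprop : ∀ x ∈ PS, lnL x ∧ ∀ i', incL (f (av (P i'))) x := by
        intro x hx
        rw [hPS, Finset.mem_union, Finset.mem_image, Finset.mem_image] at hx
        rcases hx with ⟨s', _, rfl⟩ | ⟨t, htT, rfl⟩
        · exact ⟨(emb_lnL f _).mpr (hzln s'), fun i' => (emb_incL f _ _).mpr (hzinc s' i')⟩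
        · rw [hTdef, Finset.mem_filter] at htT
          constructor
          · have := htT.2.1
            rw [show cfg.pt (Fin.natAdd cfg.j t) = decide (ptL (EN (Fin.natAdd j t))) from rfl,
              decide_eq_false_iff_not, hENr] at this
            exact hNln _ this
          · intro i'
            have := htT.2.2 i'
            rw [show cfg.inc (Fin.castAdd cfg.k (P i')) (Fin.natAdd cfg.j t)
                = decide (incL (EN (Fin.castAdd k' (P i'))) (EN (Fin.natAdd j t))) from rfl,
              decide_eq_true_eq, hENr, hENl] at this
            exact this
      apply hNK
      refine ⟨fun i' => f (av (P i')), B,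
        fun i i' h => hcP.1 (havinj (f.injective h)), hBinj, ?_, ?_, ?_⟩
      · intro i'
        have := hcP.2 i'
        rw [show cfg.pt (Fin.castAdd cfg.k (P i')) = decide (ptL (EN (Fin.castAdd k' (P i'))))
            from rfl, decide_eq_true_eq, hENl] at this
        exact this
      · exact fun i => (hprop _ (hBPS i)).1
      · exact fun i' i => (hprop _ (hBPS i)).2 i'
    · exact realize_guardL_top hcP
  -- apply the extension axiom
  have hsigmem : sigmaF m n cfg ∈ theoryT m n := Or.inr ⟨cfg, hvalid, rfl⟩
  obtain ⟨ys, hfull⟩ := realize_sigmaF.mp (hmod _ hsigmem) av ⟨hθ, hgp, hgl⟩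
  rw [realize_fullF] at hfull
  obtain ⟨hfst, hfdist, hfinc⟩ := hfull
  set EM : Fin (j + k') → M := Fin.append av ys with hEM
  -- master transfer facts
  have FPt : ∀ u, ptL (EM u) ↔ ptL (EN u) := by
    intro u
    rw [(hfst u).1, show cfg.pt u = decide (ptL (EN u)) from rfl, decide_eq_true_eq]
  have FLn : ∀ u, lnL (EM u) ↔ lnL (EN u) := by
    intro u
    rw [(hfst u).2, show cfg.pt u = decide (ptL (EN u)) from rfl, decide_eq_false_iff_not]
    exact ⟨fun h => hNln _ h, fun h => hNnpt _ h⟩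
  have FInc : ∀ u w, incL (EM u) (EM w) ↔ incL (EN u) (EN w) := by
    intro u w
    rw [hfinc u w, show cfg.inc u w = decide (incL (EN u) (EN w)) from rfl, decide_eq_true_eq]
  have FEq : ∀ u w, EM u = EM w ↔ EN u = EN w := by
    intro u w
    constructor
    · intro h
      by_cases huw : u = w
      · rw [huw]
      · exact absurd h (hfdist u w huw)
    · intro h
      rw [hENinj h]
  -- index map
  have hidxex : ∀ i : Fin k, ∃ u, EN u = xs i := by
    intro i
    by_cases h : ∃ b : M, f b = xs i
    · have hbmem : h.choose ∈ s := by
        rw [hs]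
        apply Finset.mem_union_right
        rw [Finset.mem_biUnion]
        exact ⟨i, Finset.mem_univ _, by rw [dif_pos h]; exact Finset.mem_singleton_self _⟩
      refine ⟨Fin.castAdd k' (s.equivFin ⟨h.choose, hbmem⟩), ?_⟩
      rw [hENl]
      have hav2 : av (s.equivFin ⟨h.choose, hbmem⟩) = h.choose := by
        rw [hav]; simp
      rw [hav2, h.choose_spec]
    · have hmemnf : xs i ∈ nf := by
        rw [hnf, Finset.mem_image]
        exact ⟨i, Finset.mem_filter.mpr ⟨Finset.mem_univ _, h⟩, rfl⟩
      refine ⟨Fin.natAdd j (nf.equivFin ⟨xs i, hmemnf⟩), ?_⟩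
      rw [hENr, hnv]
      simp
  choose idx hidx using hidxex
  have hkeyL : ∀ b ∈ s₀, ∃ u, EM u = b ∧ EN u = f b := by
    intro b hb
    have hbs : b ∈ s := by rw [hs]; exact Finset.mem_union_left _ hb
    refine ⟨Fin.castAdd k' (s.equivFin ⟨b, hbs⟩), ?_, ?_⟩
    · rw [hEM]
      rw [show Fin.append av ys (Fin.castAdd k' (s.equivFin ⟨b, hbs⟩))
          = av (s.equivFin ⟨b, hbs⟩) from Fin.append_left _ _ _]
      rw [hav]; simp
    · rw [hENl, hav]; simp
  refine ⟨fun i => EM (idx i), ?_⟩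
  refine (qf_transfer (⇑f) (fun i => EM (idx i)) xs s₀ ?_ ?_ ?_ ?_ hQF
    (by rw [hs₀])).mpr hxs
  · rintro (b | i) (b' | i') hz hw
    · obtain ⟨u, huM, huN⟩ := hkeyL b hz
      obtain ⟨w, hwM, hwN⟩ := hkeyL b' hw
      show b = b' ↔ f b = f b'
      rw [← huN, ← hwN, ← huM, ← hwM]
      exact FEq u w
    · obtain ⟨u, huM, huN⟩ := hkeyL b hz
      show b = EM (idx i') ↔ f b = xs i'
      rw [← huN, ← hidx i', ← huM]
      exact FEq u (idx i')
    · obtain ⟨w, hwM, hwN⟩ := hkeyL b' hw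
      show EM (idx i) = b' ↔ xs i = f b'
      rw [← hwN, ← hidx i, ← hwM]
      exact FEq (idx i) w
    · show EM (idx i) = EM (idx i') ↔ xs i = xs i'
      rw [← hidx i, ← hidx i']
      exact FEq (idx i) (idx i')
  · rintro (b | i) hz
    · obtain ⟨u, huM, huN⟩ := hkeyL b hz
      show ptL b ↔ ptL (f b)
      rw [← huN, ← huM]
      exact FPt u
    · show ptL (EM (idx i)) ↔ ptL (xs i)
      rw [← hidx i]
      exact FPt (idx i)
  · rintro (b | i) hz
    · obtain ⟨u, huM, huN⟩ := hkeyL b hz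
      show lnL b ↔ lnL (f b)
      rw [← huN, ← huM]
      exact FLn u
    · show lnL (EM (idx i)) ↔ lnL (xs i)
      rw [← hidx i]
      exact FLn (idx i)
  · rintro (b | i) (b' | i') hz hw
    · obtain ⟨u, huM, huN⟩ := hkeyL b hz
      obtain ⟨w, hwM, hwN⟩ := hkeyL b' hw
      show incL b b' ↔ incL (f b) (f b')
      rw [← huN, ← hwN, ← huM, ← hwM]
      exact FInc u w
    · obtain ⟨u, huM, huN⟩ := hkeyL b hz
      show incL b (EM (idx i')) ↔ incL (f b) (xs i')
      rw [← huN, ← hidx i', ← huM]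
      exact FInc u (idx i')
    · obtain ⟨w, hwM, hwN⟩ := hkeyL b' hw
      show incL (EM (idx i)) b' ↔ incL (xs i) (f b')
      rw [← hwN, ← hidx i, ← hwM]
      exact FInc (idx i) w
    · show incL (EM (idx i)) (EM (idx i')) ↔ incL (xs i) (xs i')
      rw [← hidx i, ← hidx i']
      exact FInc (idx i) (idx i')

end IncAux

/-- There is an `𝓛`-theory whose models are exactly the existentially closed
`K_{m,n}`-free incidence structures. -/
theorem statement_2 (m n : ℕ) (hm : 1 ≤ m) (hn : 1 ≤ n) :
    ∃ T : IncLang.Theory, ∀ (M : Type u) [IncLang.Structure M],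
      M ⊨ T ↔ IsECL m n M := by
  refine ⟨IncAux.theoryT m n, fun M _ => ⟨fun h => IncAux.isECL_of_models M h,
    fun h => IncAux.models_of_isECL M h⟩⟩
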